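/- Let B be a commutative monoid and let ℤ[B] be the monoid ring graded by a monoid homomorphism dim : B → ℕ. Suppose a commutative ring R carries an exhaustive filtration {Fₙ} by additive subgroups with Fₙ·Fₘ ⊆ Fₙ₊ₘ, and a group isomorphism Φ : R → ℤ[B] with Φ(Fₙ) equal to the span of elements of B of dimension ≤ n, such that for b, b' ∈ B with dim b = n, dim b' = m, the product in R of their preimages lies in Φ⁻¹(bb') + Fₙ₊ₘ₋₁. Then the associated graded ring ⊕ₙ Fₙ/Fₙ₋₁ of R is isomorphic as a ring to ℤ[B]. -/

import Mathlib

/-- The filtration extended by `F₋₁ = ⊥` (index shifted: `Fprev F n = F (n-1)`). -/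
def Fprev {R : Type*} [AddCommGroup R] (F : ℕ → AddSubgroup R) : ℕ → AddSubgroup R
  | 0 => ⊥
  | n + 1 => F n

/-- The `n`-th graded piece `Gₙ = Fₙ/Fₙ₋₁` of a filtration. -/
abbrev GradedPiece {R : Type*} [AddCommGroup R] (F : ℕ → AddSubgroup R) (n : ℕ) :=
  (F n) ⧸ ((Fprev F n).addSubgroupOf (F n))

namespace AGIMR
open AddSubgroup

variable {B : Type*} [CommMonoid B]

noncomputable def pi (dim : B → ℕ) (k : ℕ) : MonoidAlgebra ℤ B →+ MonoidAlgebra ℤ B :=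
  letI := Classical.decPred fun b => dim b = k
  (MonoidAlgebra.coeffAddEquiv.symm.toAddMonoidHom).comp
    ((Finsupp.filterAddHom fun b => dim b = k).comp MonoidAlgebra.coeffAddEquiv.toAddMonoidHom)

lemma pi_single (dim : B → ℕ) (k : ℕ) (b : B) (z : ℤ) :
    pi dim k (MonoidAlgebra.single b z) =
      if dim b = k then MonoidAlgebra.single b z else 0 := by
  letI := Classical.decPred fun b => dim b = k
  show MonoidAlgebra.ofCoeff (Finsupp.filter (fun b => dim b = k) (Finsupp.single b z)) = _
  split_ifs with h
  · exact congrArg MonoidAlgebra.ofCoeff (Finsupp.filter_single_of_pos _ h)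
  · exact (congrArg (MonoidAlgebra.ofCoeff (R := ℤ) (M := B)) (Finsupp.filter_single_of_neg _ h)).trans
      rfl

def Sset (dim : B → ℕ) (n : ℕ) : Set (MonoidAlgebra ℤ B) :=
  (fun b => MonoidAlgebra.single b (1 : ℤ)) '' {b | dim b ≤ n}

lemma pi_eq_zero {dim : B → ℕ} {n k : ℕ} (hk : n < k) {f : MonoidAlgebra ℤ B}
    (hf : f ∈ closure (Sset dim n)) : pi dim k f = 0 := by
  induction hf using closure_induction with
  | mem g hg => obtain ⟨b, hb, rfl⟩ := hg; rw [pi_single, if_neg (by simp at hb; omega)]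
  | zero => exact map_zero _
  | add x y _ _ hx hy => rw [map_add, hx, hy, add_zero]
  | neg x _ hx => rw [map_neg, hx, neg_zero]

end AGIMR

open AGIMR AddSubgroup in
set_option maxHeartbeats 1000000 in
/-- Let `B` be a commutative monoid graded by a monoid homomorphism `dim : B → ℕ`, and
let `R` be a commutative ring with an exhaustive multiplicative filtration `{Fₙ}` and a
group isomorphism `Φ : R ≃ ℤ[B]` sending `Fₙ` onto the span of the elements of `B` of
dimension at most `n`, such that for `b, b' ∈ B` the product in `R` of the preimages of
`b` and `b'` lies in `Φ⁻¹(b·b') + F_{dim b + dim b' - 1}`.  Then the associated graded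
ring `⊕ₙ Fₙ/Fₙ₋₁` of `R` is isomorphic as a ring to the monoid ring `ℤ[B]`. -/
theorem associated_graded_iso_monoid_ring {B : Type*} [CommMonoid B]
    (dim : B → ℕ) (hdim_one : dim 1 = 0)
    (hdim_mul : ∀ b b' : B, dim (b * b') = dim b + dim b')
    {R : Type*} [CommRing R]
    (F : ℕ → AddSubgroup R) (hmono : Monotone F) (hexh : (⨆ n, F n) = ⊤)
    (hmul : ∀ (n m : ℕ) (x y : R), x ∈ F n → y ∈ F m → x * y ∈ F (n + m))
    (Φ : R ≃+ MonoidAlgebra ℤ B)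
    (hΦ : ∀ n : ℕ, (F n).map Φ.toAddMonoidHom =
      AddSubgroup.closure ((fun b => MonoidAlgebra.single b (1 : ℤ)) '' {b | dim b ≤ n}))
    (hcompat : ∀ b b' : B,
      Φ.symm (MonoidAlgebra.single b 1) * Φ.symm (MonoidAlgebra.single b' 1) -
        Φ.symm (MonoidAlgebra.single (b * b') 1) ∈ Fprev F (dim b + dim b')) :
    ∃ mul : (DirectSum ℕ fun k => GradedPiece F k) → (DirectSum ℕ fun k => GradedPiece F k) →
        (DirectSum ℕ fun k => GradedPiece F k),
      (∀ x y, mul x y = mul y x) ∧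
      (∀ x y z, mul (mul x y) z = mul x (mul y z)) ∧
      (∀ x y z, mul x (y + z) = mul x y + mul x z) ∧
      (∀ x y z, mul (x + y) z = mul x z + mul y z) ∧
      (∃ one : DirectSum ℕ fun k => GradedPiece F k,
        (∀ x, mul one x = x) ∧
        (∀ (n m : ℕ) (x : F n) (y : F m),
          mul (DirectSum.of (fun k => GradedPiece F k) n (QuotientAddGroup.mk x))
              (DirectSum.of (fun k => GradedPiece F k) m (QuotientAddGroup.mk y)) =
            DirectSum.of (fun k => GradedPiece F k) (n + m)
              (QuotientAddGroup.mk ⟨(x : R) * y, hmul n m x y x.2 y.2⟩)) ∧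
        ∃ e : (DirectSum ℕ fun k => GradedPiece F k) ≃+ MonoidAlgebra ℤ B,
          (∀ x y, e (mul x y) = e x * e y) ∧ e one = 1) := by
  -- basic facts
  have hΦ' : ∀ n : ℕ, (F n).map Φ.toAddMonoidHom = closure (Sset dim n) := hΦ
  have hmem : ∀ n (f : MonoidAlgebra ℤ B), f ∈ closure (Sset dim n) → Φ.symm f ∈ F n := by
    intro n f hf
    rw [← hΦ' n] at hf
    obtain ⟨x, hx, rfl⟩ := hf
    simpa using hx
  have hmem' : ∀ n (x : R), x ∈ F n → Φ x ∈ closure (Sset dim n) := by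
    intro n x hx
    rw [← hΦ' n]
    exact ⟨x, hx, rfl⟩
  -- the forward map on components
  have hker : ∀ (n : ℕ) (x : (F n)) , x ∈ (Fprev F n).addSubgroupOf (F n) →
      ((pi dim n).comp ((Φ : R →+ MonoidAlgebra ℤ B).comp (F n).subtype)) x = 0 := by
    intro n x hx
    rw [AddSubgroup.mem_addSubgroupOf] at hx
    match n with
    | 0 =>
      have : (x : R) = 0 := by simpa [Fprev] using hx
      simp [this]
    | n + 1 =>
      exact pi_eq_zero (Nat.lt_succ_self n) (hmem' n _ hx)
  let comp : ∀ n, GradedPiece F n →+ MonoidAlgebra ℤ B := fun n =>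
    QuotientAddGroup.lift _ ((pi dim n).comp ((Φ : R →+ MonoidAlgebra ℤ B).comp (F n).subtype))
      (hker n)
  let e' : (DirectSum ℕ fun k => GradedPiece F k) →+ MonoidAlgebra ℤ B :=
    DirectSum.toAddMonoid comp
  have e'_of : ∀ (n : ℕ) (x : F n),
      e' (DirectSum.of (fun k => GradedPiece F k) n (QuotientAddGroup.mk x)) = pi dim n (Φ x) := by
    intro n x
    simp [e', comp, DirectSum.toAddMonoid_of]
    rfl
  -- the inverse map
  have heltmem : ∀ b : B, Φ.symm (MonoidAlgebra.single b 1) ∈ F (dim b) := fun b =>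
    hmem _ _ (AddSubgroup.subset_closure ⟨b, Set.mem_setOf_eq ▸ le_refl _, rfl⟩)
  let elt : ∀ b : B, F (dim b) := fun b => ⟨Φ.symm (MonoidAlgebra.single b 1), heltmem b⟩
  let g : MonoidAlgebra ℤ B →+ (DirectSum ℕ fun k => GradedPiece F k) :=
    (Finsupp.liftAddHom fun b =>
      zmultiplesHom _ (DirectSum.of (fun k => GradedPiece F k) (dim b) (QuotientAddGroup.mk (elt b)))
      ).comp MonoidAlgebra.coeffAddEquiv.toAddMonoidHom
  have g_single : ∀ (b : B) (z : ℤ), g (MonoidAlgebra.single b z) =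
      z • DirectSum.of (fun k => GradedPiece F k) (dim b) (QuotientAddGroup.mk (elt b)) := by
    intro b z
    show (Finsupp.liftAddHom _) (Finsupp.single b z) = _
    exact Finsupp.liftAddHom_apply_single (M := ℤ) _ b z
  -- key lemma : g ∘ pi n recovers the class
  have key1 : ∀ (n : ℕ) (f : MonoidAlgebra ℤ B) (hf : f ∈ closure (Sset dim n)),
      g (pi dim n f) = DirectSum.of (fun k => GradedPiece F k) n
        (QuotientAddGroup.mk ⟨Φ.symm f, hmem n f hf⟩) := by
    intro n f hf
    induction hf using closure_induction with
    | mem f hf =>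
      obtain ⟨b, hb, rfl⟩ := hf
      simp only [Set.mem_setOf_eq] at hb
      rw [pi_single]
      by_cases h : dim b = n
      · subst h
        rw [if_pos rfl, g_single, one_smul]
      · rw [if_neg h, map_zero]
        have hlt : dim b < n := lt_of_le_of_ne hb h
        have hzero : (QuotientAddGroup.mk (⟨Φ.symm (MonoidAlgebra.single b 1),
            hmem n _ (subset_closure ⟨b, hb, rfl⟩)⟩ : F n) : GradedPiece F n) = 0 := by
          rw [QuotientAddGroup.eq_zero_iff, AddSubgroup.mem_addSubgroupOf]
          match n, hlt with
          | n + 1, hlt => exact hmono (by omega) (heltmem b)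
        rw [hzero, map_zero]
    | zero =>
      have : (⟨Φ.symm 0, hmem n 0 (zero_mem _)⟩ : F n) = 0 := Subtype.ext (map_zero _)
      rw [map_zero, map_zero, this]
      simp
    | add x y hx hy ihx ihy =>
      have : (⟨Φ.symm (x + y), hmem n _ (add_mem hx hy)⟩ : F n) =
          ⟨Φ.symm x, hmem n x hx⟩ + ⟨Φ.symm y, hmem n y hy⟩ := Subtype.ext (map_add _ _ _)
      rw [map_add, map_add, ihx, ihy, this, QuotientAddGroup.mk_add, map_add]
    | neg x hx ihx =>
      have : (⟨Φ.symm (-x), hmem n _ (neg_mem hx)⟩ : F n) =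
          -⟨Φ.symm x, hmem n x hx⟩ := Subtype.ext (map_neg _ _)
      rw [map_neg, map_neg, ihx, this, QuotientAddGroup.mk_neg, map_neg]
  -- left inverse
  have left : ∀ x : DirectSum ℕ fun k => GradedPiece F k, g (e' x) = x := by
    intro x
    induction x using DirectSum.induction_on with
    | zero => simp
    | of n q =>
      induction q using QuotientAddGroup.induction_on with
      | H x =>
        rw [e'_of, key1 n (Φ x) (hmem' n x x.2)]
        congr 1
        exact congrArg _ (Subtype.ext (Φ.symm_apply_apply x))
    | add x y hx hy => rw [map_add, map_add, hx, hy]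
  -- right inverse
  have right : ∀ f : MonoidAlgebra ℤ B, e' (g f) = f := by
    intro f
    induction f using MonoidAlgebra.induction_linear with
    | zero => simp
    | add x y hx hy => rw [map_add, map_add, hx, hy]
    | single b z =>
      rw [g_single, map_zsmul, e'_of,
        show Φ ((elt b : R)) = MonoidAlgebra.single b 1 from Φ.apply_symm_apply _,
        pi_single, if_pos rfl]
      simp [MonoidAlgebra.smul_single]
  let e : (DirectSum ℕ fun k => GradedPiece F k) ≃+ MonoidAlgebra ℤ B :=
    { toFun := e', invFun := g, left_inv := left, right_inv := right, map_add' := e'.map_add }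
  have e_of : ∀ (n : ℕ) (x : F n),
      e (DirectSum.of (fun k => GradedPiece F k) n (QuotientAddGroup.mk x)) = pi dim n (Φ x) :=
    e'_of
  -- vanishing of errors
  have piPhiFprev : ∀ (k t : ℕ), k ≤ t → ∀ r : R, r ∈ Fprev F k → pi dim t (Φ r) = 0 := by
    intro k t hkt r hr
    match k, hkt, hr with
    | 0, hkt, hr =>
      have : r = 0 := by simpa [Fprev] using hr
      simp [this]
    | k + 1, hkt, hr => exact pi_eq_zero (by omega) (hmem' k r hr)
  -- multiplicativity
  have keymul : ∀ (n m : ℕ) (f : MonoidAlgebra ℤ B), f ∈ closure (Sset dim n) →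
      ∀ (h : MonoidAlgebra ℤ B), h ∈ closure (Sset dim m) →
      pi dim n f * pi dim m h = pi dim (n + m) (Φ (Φ.symm f * Φ.symm h)) := by
    intro n m f hf
    induction hf using closure_induction with
    | mem f hf =>
      intro h hh
      induction hh using closure_induction with
      | mem h hh =>
        obtain ⟨b, hb, rfl⟩ := hf
        obtain ⟨b', hb', rfl⟩ := hh
        simp only [Set.mem_setOf_eq] at hb hb'
        have hrw : Φ.symm (MonoidAlgebra.single b 1) * Φ.symm (MonoidAlgebra.single b' 1) =
            Φ.symm (MonoidAlgebra.single (b * b') 1) +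
            (Φ.symm (MonoidAlgebra.single b 1) * Φ.symm (MonoidAlgebra.single b' 1) -
              Φ.symm (MonoidAlgebra.single (b * b') 1)) := by ring
        rw [hrw, map_add, map_add, Φ.apply_symm_apply,
          piPhiFprev (dim b + dim b') (n + m) (by omega) _ (hcompat b b'), add_zero,
          pi_single, pi_single, pi_single, hdim_mul]
        by_cases h1 : dim b = n
        · by_cases h2 : dim b' = m
          · rw [if_pos h1, if_pos h2, if_pos (by omega), MonoidAlgebra.single_mul_single, one_mul]
          · rw [if_neg h2, mul_zero, if_neg (by omega)]
        · rw [if_neg h1, zero_mul, if_neg (by omega)]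
      | zero => simp only [map_zero, mul_zero]
      | add x y hx hy ihx ihy => simp only [map_add, mul_add, ihx, ihy]
      | neg x hx ihx => simp only [map_neg, mul_neg, ihx]
    | zero => intro h hh; simp only [map_zero, zero_mul]
    | add x y hx hy ihx ihy =>
      intro h hh
      simp only [map_add, add_mul, ihx h hh, ihy h hh]
    | neg x hx ihx =>
      intro h hh
      simp only [map_neg, neg_mul, ihx h hh]
  -- assembly
  refine ⟨fun x y => e.symm (e x * e y), ?_, ?_, ?_, ?_, e.symm 1, ?_, ?_, e, ?_, ?_⟩
  · intro x y
    show e.symm (e x * e y) = e.symm (e y * e x)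
    rw [mul_comm]
  · intro x y z
    show e.symm (e (e.symm (e x * e y)) * e z) = e.symm (e x * e (e.symm (e y * e z)))
    rw [AddEquiv.apply_symm_apply, AddEquiv.apply_symm_apply, mul_assoc]
  · intro x y z
    show e.symm (e x * e (y + z)) = e.symm (e x * e y) + e.symm (e x * e z)
    rw [map_add, mul_add, map_add]
  · intro x y z
    show e.symm (e (x + y) * e z) = e.symm (e x * e z) + e.symm (e y * e z)
    rw [map_add, add_mul, map_add]
  · intro x
    show e.symm (e (e.symm 1) * e x) = x
    rw [AddEquiv.apply_symm_apply, one_mul, AddEquiv.symm_apply_apply]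
  · intro n m x y
    show e.symm (e (DirectSum.of (fun k => GradedPiece F k) n (QuotientAddGroup.mk x)) *
        e (DirectSum.of (fun k => GradedPiece F k) m (QuotientAddGroup.mk y))) = _
    rw [e_of, e_of, keymul n m (Φ x) (hmem' n x x.2) (Φ y) (hmem' m y y.2),
      Φ.symm_apply_apply, Φ.symm_apply_apply, AddEquiv.symm_apply_eq, e_of]
  · intro x y
    show e (e.symm (e x * e y)) = e x * e y
    rw [AddEquiv.apply_symm_apply]
  · show e (e.symm 1) = 1
    rw [AddEquiv.apply_symm_apply]
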